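/- Let X be a real-valued random variable with a symmetric distribution around zero, supported on [−d, d] for some d > 0, with E[X²] ≤ γd² for some γ ∈ [0,1]. Then for every λ ∈ ℝ, E[exp(λX)] ≤ 1 + γ(cosh(λd) − 1). Moreover, equality holds for every λ ∈ ℝ when X has the distribution P(X = d) = P(X = −d) = γ/2, P(X = 0) = 1 − γ. -/

import Mathlib

open MeasureTheory ProbabilityTheory Filter Set

/-- The three-point symmetric law on `ℝ`: mass `γ/2` at `d`, mass `γ/2` at `−d`,
and mass `1 − γ` at `0`. -/
noncomputable def threePointLaw (d γ : ℝ) : Measure ℝ :=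
  ENNReal.ofReal (γ / 2) • Measure.dirac d + ENNReal.ofReal (γ / 2) • Measure.dirac (-d)
    + ENNReal.ofReal (1 - γ) • Measure.dirac 0

lemma aux_sinh_le (t : ℝ) (ht : 0 ≤ t) : Real.sinh t ≤ t * Real.cosh t := by
  have key : MonotoneOn (fun t => t * Real.cosh t - Real.sinh t) (Set.Ici 0) := by
    have hder : ∀ x : ℝ, HasDerivAt (fun t => t * Real.cosh t - Real.sinh t)
        (x * Real.sinh x) x := by
      intro x
      have h1 := ((hasDerivAt_id x).mul (Real.hasDerivAt_cosh x)).sub (Real.hasDerivAt_sinh x)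
      exact h1.congr_deriv (by simp only [id_eq]; ring)
    apply monotoneOn_of_deriv_nonneg (convex_Ici 0)
    · exact (Continuous.sub (continuous_id.mul Real.continuous_cosh)
        Real.continuous_sinh).continuousOn
    · intro x _; exact (hder x).differentiableAt.differentiableWithinAt
    · intro x hx
      rw [(hder x).deriv]
      rw [interior_Ici] at hx
      have hs : 0 ≤ Real.sinh x := by
        rw [← Real.sinh_zero]; exact Real.sinh_le_sinh.mpr (le_of_lt hx)
      exact mul_nonneg (le_of_lt hx) hs
  have h0 := key (Set.self_mem_Ici) (Set.mem_Ici.mpr ht) ht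
  simp only [Real.cosh_zero, Real.sinh_zero, mul_one, zero_mul, sub_zero] at h0
  linarith

lemma aux_cosh_le (t : ℝ) (ht : 0 ≤ t) : 2 * (Real.cosh t - 1) ≤ t * Real.sinh t := by
  have key : MonotoneOn (fun t => t * Real.sinh t - 2 * Real.cosh t) (Set.Ici 0) := by
    have hder : ∀ x : ℝ, HasDerivAt (fun t => t * Real.sinh t - 2 * Real.cosh t)
        (x * Real.cosh x - Real.sinh x) x := by
      intro x
      have h1 := ((hasDerivAt_id x).mul (Real.hasDerivAt_sinh x)).sub
        ((Real.hasDerivAt_cosh x).const_mul 2)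
      exact h1.congr_deriv (by simp only [id_eq]; ring)
    apply monotoneOn_of_deriv_nonneg (convex_Ici 0)
    · exact (Continuous.sub (continuous_id.mul Real.continuous_sinh)
        (continuous_const.mul Real.continuous_cosh)).continuousOn
    · intro x _; exact (hder x).differentiableAt.differentiableWithinAt
    · intro x hx
      rw [(hder x).deriv]
      rw [interior_Ici] at hx
      linarith [aux_sinh_le x (le_of_lt hx)]
  have h0 := key (Set.self_mem_Ici) (Set.mem_Ici.mpr ht) ht
  simp only [Real.cosh_zero, Real.sinh_zero, mul_one, zero_mul, mul_zero, zero_sub] at h0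
  linarith

lemma aux_ratio_mono (t s : ℝ) (ht : 0 ≤ t) (hts : t ≤ s) :
    s ^ 2 * (Real.cosh t - 1) ≤ t ^ 2 * (Real.cosh s - 1) := by
  rcases eq_or_lt_of_le ht with rfl | htpos
  · simp [Real.cosh_zero]
  have hspos : 0 < s := lt_of_lt_of_le htpos hts
  have key : MonotoneOn (fun x => (Real.cosh x - 1) / x ^ 2) (Set.Ioi 0) := by
    have hder : ∀ x : ℝ, x ∈ Set.Ioi (0:ℝ) → HasDerivAt (fun x => (Real.cosh x - 1) / x ^ 2)
        ((Real.sinh x * x ^ 2 - (Real.cosh x - 1) * (2 * x)) / (x ^ 2) ^ 2) x := by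
      intro x hx
      have hxp : (0:ℝ) < x := hx
      have hx0 : (x:ℝ) ^ 2 ≠ 0 := by positivity
      have h1 : HasDerivAt (fun x : ℝ => Real.cosh x - 1) (Real.sinh x) x :=
        (Real.hasDerivAt_cosh x).sub_const 1
      have h2 : HasDerivAt (fun x : ℝ => x ^ 2) (2 * x) x := by
        simpa using hasDerivAt_pow 2 x
      exact h1.div h2 hx0
    apply monotoneOn_of_deriv_nonneg (convex_Ioi 0)
    · apply ContinuousOn.div
      · exact (Real.continuous_cosh.sub continuous_const).continuousOn
      · exact (continuous_pow 2).continuousOn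
      · intro x hx; have : (0:ℝ) < x := hx; positivity
    · rw [interior_Ioi]
      intro x hx
      exact (hder x hx).differentiableAt.differentiableWithinAt
    · rw [interior_Ioi]
      intro x hx
      rw [(hder x hx).deriv]
      have hxp : (0:ℝ) < x := hx
      apply div_nonneg _ (by positivity)
      have := aux_cosh_le x (le_of_lt hxp)
      nlinarith
  have h0 := key (Set.mem_Ioi.mpr htpos) (Set.mem_Ioi.mpr hspos) hts
  simp only at h0
  rw [div_le_div_iff₀ (by positivity) (by positivity)] at h0
  linarith
  
lemma aux_pointwise {d : ℝ} (hd : 0 < d) (l x : ℝ) (hx : |x| ≤ d) :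
    Real.cosh (l * x) ≤ 1 + x ^ 2 / d ^ 2 * (Real.cosh (l * d) - 1) := by
  rcases eq_or_ne l 0 with rfl | hl
  · simp [Real.cosh_zero]
  have h1 : |l * x| ≤ |l| * d := by
    rw [abs_mul]
    exact mul_le_mul_of_nonneg_left hx (abs_nonneg l)
  have h2 := aux_ratio_mono |l * x| (|l| * d) (abs_nonneg _) h1
  rw [Real.cosh_abs] at h2
  have h3 : Real.cosh (|l| * d) = Real.cosh (l * d) := by
    rw [← Real.cosh_abs (l * d), abs_mul, abs_of_pos hd]
  rw [h3] at h2
  have h4 : (|l| * d) ^ 2 = l ^ 2 * d ^ 2 := by rw [mul_pow, sq_abs]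
  have h5 : |l * x| ^ 2 = l ^ 2 * x ^ 2 := by rw [sq_abs, mul_pow]
  rw [h4, h5] at h2
  have hl2 : 0 < l ^ 2 := by positivity
  have key : d ^ 2 * (Real.cosh (l * x) - 1) ≤ x ^ 2 * (Real.cosh (l * d) - 1) := by
    have h2' : l ^ 2 * (d ^ 2 * (Real.cosh (l * x) - 1))
        ≤ l ^ 2 * (x ^ 2 * (Real.cosh (l * d) - 1)) := by
      rw [← mul_assoc, ← mul_assoc]; exact h2
    exact le_of_mul_le_mul_left h2' hl2
  have hd2 : (0:ℝ) < d ^ 2 := by positivity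
  have h6 : Real.cosh (l * x) - 1 ≤ x ^ 2 * (Real.cosh (l * d) - 1) / d ^ 2 := by
    rw [le_div_iff₀ hd2]; nlinarith [key]
  have h7 : x ^ 2 / d ^ 2 * (Real.cosh (l * d) - 1)
      = x ^ 2 * (Real.cosh (l * d) - 1) / d ^ 2 := by ring
  rw [h7]; linarith

/-- Corollary 2 (refined Bennett inequality for symmetric distributions): if `X` is
symmetric around zero, `|X| ≤ d` a.s., and `E[X²] ≤ γ d²`, then for every `λ ∈ ℝ`,
`E[exp(λX)] ≤ 1 + γ(cosh(λd) − 1)`; moreover, equality holds for every `λ` when `X`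
has the three-point law. -/
theorem refined_bennett_symmetric
    {Ω : Type*} {m0 : MeasurableSpace Ω} {μ : Measure Ω} [IsProbabilityMeasure μ]
    {X : Ω → ℝ} (hmeas : Measurable X)
    (hsymm : Measure.map X μ = Measure.map (fun ω => -X ω) μ)
    {d γ : ℝ} (hd : 0 < d) (hγ : γ ∈ Set.Icc (0 : ℝ) 1)
    (hbdd : ∀ᵐ ω ∂μ, |X ω| ≤ d)
    (hvar : ∫ ω, (X ω) ^ 2 ∂μ ≤ γ * d ^ 2) :
    (∀ l : ℝ, ∫ ω, Real.exp (l * X ω) ∂μ ≤ 1 + γ * (Real.cosh (l * d) - 1)) ∧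
    (∀ (Ω' : Type) (m' : MeasurableSpace Ω') (μ' : Measure Ω'),
      IsProbabilityMeasure μ' → ∀ Y : Ω' → ℝ, Measurable Y →
      Measure.map Y μ' = threePointLaw d γ →
      ∀ l : ℝ, ∫ ω, Real.exp (l * Y ω) ∂μ' = 1 + γ * (Real.cosh (l * d) - 1)) := by
  obtain ⟨hγ0, hγ1⟩ := hγ
  constructor
  · intro l
    -- integrability facts
    have hintexp : ∀ c : ℝ, Integrable (fun ω => Real.exp (c * X ω)) μ := by
      intro c
      apply Integrable.mono' (integrable_const (Real.exp (|c| * d)))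
        ((hmeas.const_mul c).exp.aestronglyMeasurable)
      filter_upwards [hbdd] with ω hω
      rw [Real.norm_eq_abs, abs_of_pos (Real.exp_pos _)]
      apply Real.exp_le_exp.mpr
      calc c * X ω ≤ |c * X ω| := le_abs_self _
        _ = |c| * |X ω| := abs_mul _ _
        _ ≤ |c| * d := mul_le_mul_of_nonneg_left hω (abs_nonneg c)
    have hintsq : Integrable (fun ω => (X ω) ^ 2) μ := by
      apply Integrable.mono' (integrable_const (d ^ 2))
        ((hmeas.pow_const 2).aestronglyMeasurable)
      filter_upwards [hbdd] with ω hω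
      rw [Real.norm_eq_abs, abs_pow]
      exact pow_le_pow_left₀ (abs_nonneg _) hω 2
    -- symmetry: ∫ exp(lX) = ∫ exp(-lX)
    have hexpm : Measurable (fun x : ℝ => Real.exp (l * x)) := by fun_prop
    have hsym2 : ∫ ω, Real.exp (l * X ω) ∂μ = ∫ ω, Real.exp (-l * X ω) ∂μ := by
      have h1 : ∫ ω, Real.exp (l * X ω) ∂μ = ∫ x, Real.exp (l * x) ∂(Measure.map X μ) :=
        (integral_map hmeas.aemeasurable hexpm.aestronglyMeasurable).symm
      have h2 : ∫ x, Real.exp (l * x) ∂(Measure.map (fun ω => -X ω) μ)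
          = ∫ ω, Real.exp (l * (-X ω)) ∂μ :=
        integral_map hmeas.neg.aemeasurable hexpm.aestronglyMeasurable
      rw [h1, hsymm, h2]
      congr 1; ext ω; ring_nf
    -- replace exp by cosh
    have hcosh_eq : ∫ ω, Real.exp (l * X ω) ∂μ = ∫ ω, Real.cosh (l * X ω) ∂μ := by
      have h3 : ∫ ω, Real.cosh (l * X ω) ∂μ
          = (∫ ω, Real.exp (l * X ω) ∂μ + ∫ ω, Real.exp (-l * X ω) ∂μ) / 2 := by
        rw [← integral_add (hintexp l) (hintexp (-l)), ← integral_div]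
        congr 1; ext ω
        rw [Real.cosh_eq]; ring_nf
      rw [h3, ← hsym2]; ring
    rw [hcosh_eq]
    -- pointwise bound and integrate
    have hintrhs : Integrable (fun ω => 1 + (X ω) ^ 2 / d ^ 2 * (Real.cosh (l * d) - 1)) μ :=
      (integrable_const 1).add ((hintsq.div_const (d ^ 2)).mul_const _)
    have hintcosh : Integrable (fun ω => Real.cosh (l * X ω)) μ := by
      have := (hintexp l).add (hintexp (-l))
      have h4 : (fun ω => Real.cosh (l * X ω))
          = fun ω => (Real.exp (l * X ω) + Real.exp (-l * X ω)) / 2 := by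
        ext ω; rw [Real.cosh_eq]; ring_nf
      rw [h4]
      exact this.div_const 2
    have hmono : ∫ ω, Real.cosh (l * X ω) ∂μ
        ≤ ∫ ω, (1 + (X ω) ^ 2 / d ^ 2 * (Real.cosh (l * d) - 1)) ∂μ := by
      apply integral_mono_ae hintcosh hintrhs
      filter_upwards [hbdd] with ω hω
      exact aux_pointwise hd l (X ω) hω
    refine hmono.trans ?_
    rw [integral_add (integrable_const 1) ((hintsq.div_const (d ^ 2)).mul_const _),
      integral_const, integral_mul_const, integral_div]
    simp only [measure_univ, probReal_univ, ENNReal.toReal_one, smul_eq_mul, one_mul, mul_one]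
    have hcosh1 := Real.one_le_cosh (l * d)
    have hd2 : (0:ℝ) < d ^ 2 := by positivity
    have : (∫ ω, (X ω) ^ 2 ∂μ) / d ^ 2 ≤ γ := by
      rw [div_le_iff₀ hd2]; linarith
    nlinarith [this, sub_nonneg.mpr hcosh1]
  · intro Ω' m' μ' hprob Y hYmeas hYlaw l
    have hexp_meas : Measurable (fun x : ℝ => Real.exp (l * x)) :=
      (measurable_id.const_mul l).exp
    have h1 : ∫ ω, Real.exp (l * Y ω) ∂μ' = ∫ x, Real.exp (l * x) ∂(threePointLaw d γ) := by
      rw [← hYlaw, integral_map hYmeas.aemeasurable hexp_meas.aestronglyMeasurable]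
    rw [h1]
    unfold threePointLaw
    have hdint : ∀ (a : ℝ), Integrable (fun x : ℝ => Real.exp (l * x)) (Measure.dirac a) :=
      fun a => (integrable_const (Real.exp (l * a))).congr
        (MeasureTheory.ae_eq_dirac (fun x => Real.exp (l * x))).symm
    have hne : ∀ c : ℝ, ENNReal.ofReal c ≠ ⊤ := fun c => ENNReal.ofReal_ne_top
    rw [integral_add_measure (((hdint d).smul_measure (hne _)).add_measure
        ((hdint (-d)).smul_measure (hne _))) ((hdint 0).smul_measure (hne _)),
      integral_add_measure ((hdint d).smul_measure (hne _))
        ((hdint (-d)).smul_measure (hne _)),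
      integral_smul_measure, integral_smul_measure, integral_smul_measure,
      integral_dirac, integral_dirac, integral_dirac,
      ENNReal.toReal_ofReal (by linarith : (0:ℝ) ≤ γ / 2),
      ENNReal.toReal_ofReal (by linarith : (0:ℝ) ≤ 1 - γ)]
    rw [Real.cosh_eq]
    simp only [smul_eq_mul, mul_zero, Real.exp_zero, mul_neg]
    ring_nf
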